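/- If a double series ∑_{j=0}^∞ ∑_{k=0}^∞ a_{j,k} of complex numbers converges regularly, then its sum can be computed by successive summation: ∑_{j=0}^∞ ∑_{k=0}^∞ a_{j,k} = ∑_{j=0}^∞ (∑_{k=0}^∞ a_{j,k}) = ∑_{k=0}^∞ (∑_{j=0}^∞ a_{j,k}), where the left-hand side denotes the Pringsheim sum. In particular all the inner single series and the two outer single series converge. -/

import Mathlib

open Filter Finset


lemma sumdiff (f : ℕ → ℂ) {n N : ℕ} (h : n ≤ N) :
    ∑ k ∈ Finset.range (N+1), f k - ∑ k ∈ Finset.range (n+1), f k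
      = ∑ k ∈ Finset.Icc (n+1) N, f k := by
  have h2 : ∑ k ∈ Finset.range (n+1), f k + ∑ k ∈ Finset.Icc (n+1) N, f k
      = ∑ k ∈ Finset.range (N+1), f k := by
    rw [Finset.range_eq_Ico, Finset.range_eq_Ico, ← Finset.Ico_add_one_right_eq_Icc (n+1) N]
    exact Finset.sum_Ico_consecutive f (Nat.zero_le (n+1)) (by omega : n + 1 ≤ N + 1)
  rw [← h2]; ring

lemma icc0 (P : ℕ) : Finset.Icc 0 P = Finset.range (P+1) := by
  rw [Finset.range_eq_Ico, Finset.Ico_add_one_right_eq_Icc]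

lemma Sdiff (a : ℕ → ℕ → ℂ) {m M n N : ℕ} (hm : m ≤ M) (hn : n ≤ N) :
    (∑ j ∈ Finset.range (M+1), ∑ k ∈ Finset.range (N+1), a j k)
      - (∑ j ∈ Finset.range (m+1), ∑ k ∈ Finset.range (n+1), a j k)
    = (∑ j ∈ Finset.Icc 0 M, ∑ k ∈ Finset.Icc (n+1) N, a j k)
      + (∑ j ∈ Finset.Icc (m+1) M, ∑ k ∈ Finset.Icc 0 n, a j k) := by
  have A : (∑ j ∈ Finset.range (M+1), ∑ k ∈ Finset.range (N+1), a j k)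
      - (∑ j ∈ Finset.range (M+1), ∑ k ∈ Finset.range (n+1), a j k)
      = ∑ j ∈ Finset.Icc 0 M, ∑ k ∈ Finset.Icc (n+1) N, a j k := by
    rw [← Finset.sum_sub_distrib, icc0]
    exact Finset.sum_congr rfl fun j _ => sumdiff _ hn
  have B : (∑ j ∈ Finset.range (M+1), ∑ k ∈ Finset.range (n+1), a j k)
      - (∑ j ∈ Finset.range (m+1), ∑ k ∈ Finset.range (n+1), a j k)
      = ∑ j ∈ Finset.Icc (m+1) M, ∑ k ∈ Finset.Icc 0 n, a j k := by
    rw [sumdiff (fun j => ∑ k ∈ Finset.range (n+1), a j k) hm]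
    exact Finset.sum_congr rfl fun j _ => by rw [icc0]
  rw [← A, ← B]; ring

/-- If a double series of complex numbers converges regularly, then its
Pringsheim sum can be computed by successive summation: every row series and every column
series converges, and the two outer (iterated) series converge to the Pringsheim sum. -/
theorem regular_convergence_implies_successive_summation (a : ℕ → ℕ → ℂ)
    (hreg : ∀ ε : ℝ, 0 < ε → ∃ κ : ℕ, ∀ m M n N : ℕ, m ≤ M → n ≤ N → κ < max m n →
      ‖∑ j ∈ Finset.Icc m M, ∑ k ∈ Finset.Icc n N, a j k‖ < ε) :
    ∃ s : ℂ, ∃ r c : ℕ → ℂ,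
      (∀ ε : ℝ, 0 < ε → ∃ κ : ℕ, ∀ m n : ℕ, κ < m → κ < n →
        ‖(∑ j ∈ Finset.range (m + 1), ∑ k ∈ Finset.range (n + 1), a j k) - s‖ < ε) ∧
      (∀ j : ℕ, Tendsto (fun n => ∑ k ∈ Finset.range (n + 1), a j k) atTop (nhds (r j))) ∧
      (∀ k : ℕ, Tendsto (fun m => ∑ j ∈ Finset.range (m + 1), a j k) atTop (nhds (c k))) ∧
      Tendsto (fun m => ∑ j ∈ Finset.range (m + 1), r j) atTop (nhds s) ∧
      Tendsto (fun n => ∑ k ∈ Finset.range (n + 1), c k) atTop (nhds s) := by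
  set S : ℕ → ℕ → ℂ := fun m n => ∑ j ∈ Finset.range (m + 1), ∑ k ∈ Finset.range (n + 1), a j k
    with hS
  -- rows converge
  have hrow : ∀ j, ∃ L, Tendsto (fun n => ∑ k ∈ Finset.range (n + 1), a j k) atTop (nhds L) := by
    intro j
    have hc : CauchySeq (fun n => ∑ k ∈ Finset.range (n + 1), a j k) := by
      rw [Metric.cauchySeq_iff']
      intro ε hε
      obtain ⟨κ, hκ⟩ := hreg ε hε
      refine ⟨κ + 1, fun n hn => ?_⟩
      rw [dist_eq_norm, sumdiff _ hn]
      rcases eq_or_lt_of_le hn with h | h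
      · simp [← h, hε]
      · have := hκ j j (κ + 2) n le_rfl (by omega) (by omega)
        simpa using this
    exact cauchySeq_tendsto_of_complete hc
  choose r hr using hrow
  -- columns converge
  have hcol : ∀ k, ∃ L, Tendsto (fun m => ∑ j ∈ Finset.range (m + 1), a j k) atTop (nhds L) := by
    intro k
    have hc : CauchySeq (fun m => ∑ j ∈ Finset.range (m + 1), a j k) := by
      rw [Metric.cauchySeq_iff']
      intro ε hε
      obtain ⟨κ, hκ⟩ := hreg ε hε
      refine ⟨κ + 1, fun m hm => ?_⟩
      rw [dist_eq_norm, sumdiff _ hm]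
      rcases eq_or_lt_of_le hm with h | h
      · simp [← h, hε]
      · have := hκ (κ + 2) m k k (by omega) le_rfl (by omega)
        simpa using this
    exact cauchySeq_tendsto_of_complete hc
  choose c hc using hcol
  -- diagonal converges
  have hdiag : ∃ s, Tendsto (fun n => S n n) atTop (nhds s) := by
    have hcs : CauchySeq (fun n => S n n) := by
      rw [Metric.cauchySeq_iff']
      intro ε hε
      obtain ⟨κ, hκ⟩ := hreg (ε / 2) (by linarith)
      refine ⟨κ + 1, fun n hn => ?_⟩
      rw [dist_eq_norm]
      rcases eq_or_lt_of_le hn with h | h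
      · simp [← h, hε]
      · rw [hS, Sdiff a hn hn]
        have h1 := hκ 0 n (κ + 2) n (Nat.zero_le n) (by omega) (by omega)
        have h2 := hκ (κ + 2) n 0 (κ + 1) (by omega) (Nat.zero_le _) (by omega)
        calc ‖_ + _‖ ≤ _ + _ := norm_add_le _ _
          _ < ε / 2 + ε / 2 := by exact add_lt_add h1 h2
          _ = ε := by ring
    exact cauchySeq_tendsto_of_complete hcs
  obtain ⟨s, hs⟩ := hdiag
  -- Pringsheim convergence to s
  have hP : ∀ ε : ℝ, 0 < ε → ∃ κ : ℕ, ∀ m n : ℕ, κ < m → κ < n → ‖S m n - s‖ < ε := by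
    intro ε hε
    obtain ⟨κ, hκ⟩ := hreg (ε / 3) (by linarith)
    refine ⟨κ, fun m n hm hn => ?_⟩
    have hb : ∀ P, max m n < P → ‖S m n - S P P‖ < ε / 3 + ε / 3 := by
      intro P hP'
      have hmP : m ≤ P := le_of_lt (lt_of_le_of_lt (le_max_left m n) hP')
      have hnP : n ≤ P := le_of_lt (lt_of_le_of_lt (le_max_right m n) hP')
      have : ‖S P P - S m n‖ < ε / 3 + ε / 3 := by
        rw [hS, Sdiff a hmP hnP]
        have h1 := hκ 0 P (n + 1) P (Nat.zero_le P)
          (by omega : n + 1 ≤ P) (by omega)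
        have h2 := hκ (m + 1) P 0 n (by omega : m + 1 ≤ P) (Nat.zero_le n)
          (by omega)
        calc ‖_ + _‖ ≤ _ + _ := norm_add_le _ _
          _ < ε / 3 + ε / 3 := add_lt_add h1 h2
      rw [← norm_neg]; simpa using this
    have hlim : Tendsto (fun P => ‖S m n - S P P‖) atTop (nhds ‖S m n - s‖) :=
      (tendsto_const_nhds.sub hs).norm
    have hle : ‖S m n - s‖ ≤ ε / 3 + ε / 3 := by
      refine le_of_tendsto hlim (Filter.eventually_atTop.2 ⟨max m n + 1, fun P hP' => ?_⟩)
      exact le_of_lt (hb P (by omega))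
    linarith
  refine ⟨s, r, c, hP, hr, hc, ?_, ?_⟩
  · -- row sums tend to s
    rw [Metric.tendsto_atTop]
    intro ε hε
    obtain ⟨κ, hκ⟩ := hP (ε / 2) (by linarith)
    refine ⟨κ + 1, fun m hm => ?_⟩
    have hTm : Tendsto (fun n => S m n) atTop
        (nhds (∑ j ∈ Finset.range (m + 1), r j)) := by
      exact tendsto_finset_sum _ (fun j _ => hr j)
    rw [dist_eq_norm]
    have hlim : Tendsto (fun n => ‖S m n - s‖) atTop
        (nhds ‖(∑ j ∈ Finset.range (m + 1), r j) - s‖) := (hTm.sub tendsto_const_nhds).norm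
    have hle : ‖(∑ j ∈ Finset.range (m + 1), r j) - s‖ ≤ ε / 2 := by
      refine le_of_tendsto hlim (Filter.eventually_atTop.2 ⟨κ + 1, fun n hn => ?_⟩)
      exact le_of_lt (hκ m n (by omega) (by omega))
    linarith
  · -- column sums tend to s
    rw [Metric.tendsto_atTop]
    intro ε hε
    obtain ⟨κ, hκ⟩ := hP (ε / 2) (by linarith)
    refine ⟨κ + 1, fun n hn => ?_⟩
    have hTn : Tendsto (fun m => S m n) atTop
        (nhds (∑ k ∈ Finset.range (n + 1), c k)) := by
      have := tendsto_finset_sum (Finset.range (n + 1))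
        (fun k (_ : k ∈ Finset.range (n + 1)) => hc k)
      convert this using 2 with m
      rw [hS]
      exact Finset.sum_comm
    rw [dist_eq_norm]
    have hlim : Tendsto (fun m => ‖S m n - s‖) atTop
        (nhds ‖(∑ k ∈ Finset.range (n + 1), c k) - s‖) := (hTn.sub tendsto_const_nhds).norm
    have hle : ‖(∑ k ∈ Finset.range (n + 1), c k) - s‖ ≤ ε / 2 := by
      refine le_of_tendsto hlim (Filter.eventually_atTop.2 ⟨κ + 1, fun m hm => ?_⟩)
      exact le_of_lt (hκ m n (by omega) (by omega))
    linarith
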